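/- Let I be a traditional interpretation without unreachable objects and suppose the quotient QS-interpretation I' = I/∼^{QS} is finite with n elements. Then I' is a minimal QS-interpretation validating the same terminological axioms of L_Φ as I: every QS-interpretation that validates exactly the same axioms C ⊑ D of L_Φ as I has at least n elements in its domain. -/
import Mathlib


/-- A set of DL-features (subset of {I, O, Q, U, Self}). -/
structure DLFeat where
  hasI : Bool
  hasO : Bool
  hasQ : Bool
  hasU : Bool
  hasSelf : Bool

/-- An interpretation with concept names `CN`, role names `RN`, individual names `IN`
and domain `D`. -/
structure Interp (CN RN IN : Type) (D : Type) where
  cInt : CN → Set D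
  rInt : RN → D → D → Prop
  iInt : IN → D

/-- Interpretation of a basic role: a role name, possibly inverted. -/
def brInt {CN RN IN D : Type} (I : Interp CN RN IN D) (R : RN × Bool) (x y : D) : Prop :=
  if R.2 then I.rInt R.1 y x else I.rInt R.1 x y

mutual
/-- Concepts of the full language (membership in `L_Φ` is a separate predicate). -/
inductive DLConcept (CN RN IN : Type) : Type where
  | atom (A : CN)
  | top
  | bot
  | neg (C : DLConcept CN RN IN)
  | conj (C D : DLConcept CN RN IN)
  | disj (C D : DLConcept CN RN IN)
  | all (R : DLRole CN RN IN) (C : DLConcept CN RN IN)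
  | ex (R : DLRole CN RN IN) (C : DLConcept CN RN IN)
  | nom (a : IN)
  | atLeast (n : ℕ) (r : RN) (inverted : Bool) (C : DLConcept CN RN IN)
  | atMost (n : ℕ) (r : RN) (inverted : Bool) (C : DLConcept CN RN IN)
  | exSelf (r : RN)
/-- Roles of the full language. -/
inductive DLRole (CN RN IN : Type) : Type where
  | name (r : RN)
  | eps
  | comp (R S : DLRole CN RN IN)
  | runion (R S : DLRole CN RN IN)
  | star (R : DLRole CN RN IN)
  | test (C : DLConcept CN RN IN)
  | inv (r : RN)
  | univ
end

mutual
/-- The concept belongs to the language `L_Φ`. -/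
def DLConcept.inL {CN RN IN : Type} (Φ : DLFeat) : DLConcept CN RN IN → Prop
  | .atom _ => True
  | .top => True
  | .bot => True
  | .neg C => C.inL Φ
  | .conj C D => C.inL Φ ∧ D.inL Φ
  | .disj C D => C.inL Φ ∧ D.inL Φ
  | .all R C => R.inL Φ ∧ C.inL Φ
  | .ex R C => R.inL Φ ∧ C.inL Φ
  | .nom _ => Φ.hasO = true
  | .atLeast _ _ b C => Φ.hasQ = true ∧ (b = true → Φ.hasI = true) ∧ C.inL Φ
  | .atMost _ _ b C => Φ.hasQ = true ∧ (b = true → Φ.hasI = true) ∧ C.inL Φ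
  | .exSelf _ => Φ.hasSelf = true
/-- The role belongs to the language `L_Φ`. -/
def DLRole.inL {CN RN IN : Type} (Φ : DLFeat) : DLRole CN RN IN → Prop
  | .name _ => True
  | .eps => True
  | .comp R S => R.inL Φ ∧ S.inL Φ
  | .runion R S => R.inL Φ ∧ S.inL Φ
  | .star R => R.inL Φ
  | .test C => C.inL Φ
  | .inv _ => Φ.hasI = true
  | .univ => Φ.hasU = true
end

mutual
/-- Semantics of concepts. -/
def DLConcept.sem {CN RN IN D : Type} (I : Interp CN RN IN D) : DLConcept CN RN IN → Set D
  | .atom A => I.cInt A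
  | .top => Set.univ
  | .bot => ∅
  | .neg C => (DLConcept.sem I C)ᶜ
  | .conj C C' => DLConcept.sem I C ∩ DLConcept.sem I C'
  | .disj C C' => DLConcept.sem I C ∪ DLConcept.sem I C'
  | .all R C => {x | ∀ y, DLRole.sem I R x y → y ∈ DLConcept.sem I C}
  | .ex R C => {x | ∃ y, DLRole.sem I R x y ∧ y ∈ DLConcept.sem I C}
  | .nom a => {I.iInt a}
  | .atLeast n r b C =>
      {x | (n : Cardinal) ≤ Cardinal.mk {y // brInt I (r, b) x y ∧ y ∈ DLConcept.sem I C}}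
  | .atMost n r b C =>
      {x | Cardinal.mk {y // brInt I (r, b) x y ∧ y ∈ DLConcept.sem I C} ≤ (n : Cardinal)}
  | .exSelf r => {x | I.rInt r x x}
/-- Semantics of roles. -/
def DLRole.sem {CN RN IN D : Type} (I : Interp CN RN IN D) : DLRole CN RN IN → D → D → Prop
  | .name r => I.rInt r
  | .eps => Eq
  | .comp R S => Relation.Comp (DLRole.sem I R) (DLRole.sem I S)
  | .runion R S => fun x y => DLRole.sem I R x y ∨ DLRole.sem I S x y
  | .star R => Relation.ReflTransGen (DLRole.sem I R)
  | .test C => fun x y => x = y ∧ x ∈ DLConcept.sem I C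
  | .inv r => fun x y => I.rInt r y x
  | .univ => fun _ _ => True
end

/-- `Z` is an `L_Φ`-bisimulation between `I` and `I'`. -/
def Bisim {CN RN IN D D' : Type} (Φ : DLFeat) (I : Interp CN RN IN D)
    (I' : Interp CN RN IN D') (Z : D → D' → Prop) : Prop :=
  (∀ a : IN, Z (I.iInt a) (I'.iInt a)) ∧
  (∀ (A : CN) x x', Z x x' → (x ∈ I.cInt A ↔ x' ∈ I'.cInt A)) ∧
  (∀ (r : RN) x x' y, Z x x' → I.rInt r x y → ∃ y', Z y y' ∧ I'.rInt r x' y') ∧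
  (∀ (r : RN) x x' y', Z x x' → I'.rInt r x' y' → ∃ y, Z y y' ∧ I.rInt r x y) ∧
  (Φ.hasI = true →
    (∀ (r : RN) x x' y, Z x x' → I.rInt r y x → ∃ y', Z y y' ∧ I'.rInt r y' x') ∧
    (∀ (r : RN) x x' y', Z x x' → I'.rInt r y' x' → ∃ y, Z y y' ∧ I.rInt r y x)) ∧
  (Φ.hasO = true → ∀ (a : IN) x x', Z x x' → (x = I.iInt a ↔ x' = I'.iInt a)) ∧
  (Φ.hasQ = true → ∀ (r : RN) x x', Z x x' →
    ∃ h : {y // I.rInt r x y} ≃ {y' // I'.rInt r x' y'}, ∀ y, Z y.1 (h y).1) ∧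
  (Φ.hasQ = true → Φ.hasI = true → ∀ (r : RN) x x', Z x x' →
    ∃ h : {y // I.rInt r y x} ≃ {y' // I'.rInt r y' x'}, ∀ y, Z y.1 (h y).1) ∧
  (Φ.hasU = true → (∀ x, ∃ x', Z x x') ∧ (∀ x', ∃ x, Z x x')) ∧
  (Φ.hasSelf = true → ∀ (r : RN) x x', Z x x' → (I.rInt r x x ↔ I'.rInt r x' x'))

/-- One step along a basic role (role name, or inverse of a role name if `I ∈ Φ`). -/
def basicStep {CN RN IN D : Type} (Φ : DLFeat) (I : Interp CN RN IN D) (x y : D) : Prop :=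
  ∃ r : RN, I.rInt r x y ∨ (Φ.hasI = true ∧ I.rInt r y x)

/-- `I` is unreachable-objects-free: every element is reachable from some named
individual via a finite path of basic-role edges. -/
def UOF {CN RN IN D : Type} (Φ : DLFeat) (I : Interp CN RN IN D) : Prop :=
  ∀ x : D, ∃ a : IN, Relation.ReflTransGen (basicStep Φ I) (I.iInt a) x

/-- `I` validates the GCI `C ⊑ C'`. -/
def satGCI {CN RN IN D : Type} (I : Interp CN RN IN D) (C C' : DLConcept CN RN IN) : Prop :=
  DLConcept.sem I C ⊆ DLConcept.sem I C'

/-- `I` is a model of the TBox `T`. -/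
def modelsTBox {CN RN IN D : Type} (I : Interp CN RN IN D)
    (T : Set (DLConcept CN RN IN × DLConcept CN RN IN)) : Prop :=
  ∀ p ∈ T, satGCI I p.1 p.2

/-- Individual assertions. -/
inductive Assertion (CN RN IN : Type) : Type where
  | conc (C : DLConcept CN RN IN) (a : IN)
  | rolePos (R : DLRole CN RN IN) (a b : IN)
  | roleNeg (R : DLRole CN RN IN) (a b : IN)
  | eq (a b : IN)
  | neq (a b : IN)

/-- The assertion belongs to `L_Φ`. -/
def Assertion.inL {CN RN IN : Type} (Φ : DLFeat) : Assertion CN RN IN → Prop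
  | .conc C _ => C.inL Φ
  | .rolePos R _ _ => R.inL Φ
  | .roleNeg R _ _ => R.inL Φ
  | .eq _ _ => True
  | .neq _ _ => True

/-- `I` satisfies the individual assertion. -/
def Assertion.sat {CN RN IN D : Type} (I : Interp CN RN IN D) : Assertion CN RN IN → Prop
  | .conc C a => I.iInt a ∈ DLConcept.sem I C
  | .rolePos R a b => DLRole.sem I R (I.iInt a) (I.iInt b)
  | .roleNeg R a b => ¬ DLRole.sem I R (I.iInt a) (I.iInt b)
  | .eq a b => I.iInt a = I.iInt b
  | .neq a b => I.iInt a ≠ I.iInt b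

/-- `I` is a model of the ABox `A`. -/
def modelsABox {CN RN IN D : Type} (I : Interp CN RN IN D) (A : Set (Assertion CN RN IN)) : Prop :=
  ∀ φ ∈ A, φ.sat I

/-- A role axiom `R₁ ∘ … ∘ R_k ⊑ r` (`ε ⊑ r` when the list is empty), the `R_i` basic roles. -/
structure RoleAx (RN : Type) where
  lhs : List (RN × Bool)
  rhs : RN

/-- The role axiom is in `L_Φ` (inverse basic roles only if `I ∈ Φ`). -/
def RoleAx.inL {RN : Type} (Φ : DLFeat) (ax : RoleAx RN) : Prop :=
  ∀ p ∈ ax.lhs, p.2 = true → Φ.hasI = true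

/-- Interpretation of a composition chain of basic roles (`ε` for the empty chain). -/
def chainInt {CN RN IN D : Type} (I : Interp CN RN IN D) : List (RN × Bool) → D → D → Prop
  | [] => Eq
  | R :: l => fun x z => ∃ y, brInt I R x y ∧ chainInt I l y z

/-- `I` validates the role axiom. -/
def satRoleAx {CN RN IN D : Type} (I : Interp CN RN IN D) (ax : RoleAx RN) : Prop :=
  ∀ x y, chainInt I ax.lhs x y → I.rInt ax.rhs x y

/-- `I` is a model of the RBox `R`. -/
def modelsRBox {CN RN IN D : Type} (I : Interp CN RN IN D) (R : Set (RoleAx RN)) : Prop :=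
  ∀ ax ∈ R, satRoleAx I ax

/-- `I'` is an r-extension of `I`. -/
def RExt {CN RN IN D : Type} (I I' : Interp CN RN IN D) : Prop :=
  I'.cInt = I.cInt ∧ I'.iInt = I.iInt ∧ ∀ (r : RN) x y, I.rInt r x y → I'.rInt r x y

/-- `I'` is the least r-extension of `I` validating the RBox `R`. -/
def LeastRExt {CN RN IN D : Type} (I : Interp CN RN IN D) (R : Set (RoleAx RN))
    (I' : Interp CN RN IN D) : Prop :=
  RExt I I' ∧ modelsRBox I' R ∧
    ∀ I'' : Interp CN RN IN D, RExt I I'' → modelsRBox I'' R →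
      ∀ (r : RN) x y, I'.rInt r x y → I''.rInt r x y

/-- `I` is finitely branching w.r.t. `L_Φ`. -/
def FinBranch {CN RN IN D : Type} (Φ : DLFeat) (I : Interp CN RN IN D) : Prop :=
  ∀ (r : RN) (x : D), {y | I.rInt r x y}.Finite ∧ (Φ.hasI = true → {y | I.rInt r y x}.Finite)

/-- `x` and `x'` are `L_Φ`-equivalent: they satisfy the same concepts of `L_Φ`. -/
def LEquiv {CN RN IN D D' : Type} (Φ : DLFeat) (I : Interp CN RN IN D)
    (I' : Interp CN RN IN D') (x : D) (x' : D') : Prop :=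
  ∀ C : DLConcept CN RN IN, C.inL Φ → (x ∈ DLConcept.sem I C ↔ x' ∈ DLConcept.sem I' C)

/-- The largest `L_Φ`-auto-bisimulation of `I` (union of all auto-bisimulations). -/
def gbisim {CN RN IN D : Type} (Φ : DLFeat) (I : Interp CN RN IN D) (x y : D) : Prop :=
  ∃ Z, Bisim Φ I I Z ∧ Z x y

/-- The quotient interpretation of `I` w.r.t. the largest `L_Φ`-auto-bisimulation. -/
def quotInterp {CN RN IN D : Type} (Φ : DLFeat) (I : Interp CN RN IN D) :
    Interp CN RN IN (Quot (gbisim Φ I)) where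
  cInt A := {q | ∃ x, Quot.mk _ x = q ∧ x ∈ I.cInt A}
  rInt r q q' := ∃ x y, Quot.mk _ x = q ∧ Quot.mk _ y = q' ∧ I.rInt r x y
  iInt a := Quot.mk _ (I.iInt a)

/-- A QS-interpretation: an interpretation together with multiplicity functions for
basic roles and self-loop sets for role names. -/
structure QSInterp (CN RN IN D : Type) where
  toInterp : Interp CN RN IN D
  QU : (RN × Bool) → D → D → ℕ
  SE : RN → Set D

/-- The defining positivity condition of QS-interpretations:
`QU R x y > 0` iff `R` connects `x` to `y`. -/
def QSInterp.Proper {CN RN IN D : Type} (J : QSInterp CN RN IN D) : Prop :=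
  ∀ (R : RN × Bool) x y, 0 < J.QU R x y ↔ brInt J.toInterp R x y

/-- `Σ {f y : y ∈ S}` as an extended natural number. -/
noncomputable def qsum {D : Type} (f : D → ℕ) (S : Set D) : ℕ∞ :=
  ⨆ (s : Finset D) (_ : ↑s ⊆ S), (∑ y ∈ s, f y : ℕ∞)

mutual
/-- Semantics of concepts in a QS-interpretation. -/
noncomputable def DLConcept.qsem {CN RN IN D : Type} (J : QSInterp CN RN IN D) :
    DLConcept CN RN IN → Set D
  | .atom A => J.toInterp.cInt A
  | .top => Set.univ
  | .bot => ∅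
  | .neg C => (DLConcept.qsem J C)ᶜ
  | .conj C C' => DLConcept.qsem J C ∩ DLConcept.qsem J C'
  | .disj C C' => DLConcept.qsem J C ∪ DLConcept.qsem J C'
  | .all R C => {x | ∀ y, DLRole.qsem J R x y → y ∈ DLConcept.qsem J C}
  | .ex R C => {x | ∃ y, DLRole.qsem J R x y ∧ y ∈ DLConcept.qsem J C}
  | .nom a => {J.toInterp.iInt a}
  | .atLeast n r b C => {x | (n : ℕ∞) ≤ qsum (J.QU (r, b) x) (DLConcept.qsem J C)}
  | .atMost n r b C => {x | qsum (J.QU (r, b) x) (DLConcept.qsem J C) ≤ (n : ℕ∞)}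
  | .exSelf r => J.SE r
/-- Semantics of roles in a QS-interpretation. -/
noncomputable def DLRole.qsem {CN RN IN D : Type} (J : QSInterp CN RN IN D) :
    DLRole CN RN IN → D → D → Prop
  | .name r => J.toInterp.rInt r
  | .eps => Eq
  | .comp R S => Relation.Comp (DLRole.qsem J R) (DLRole.qsem J S)
  | .runion R S => fun x y => DLRole.qsem J R x y ∨ DLRole.qsem J S x y
  | .star R => Relation.ReflTransGen (DLRole.qsem J R)
  | .test C => fun x y => x = y ∧ x ∈ DLConcept.qsem J C
  | .inv r => fun x y => J.toInterp.rInt r y x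
  | .univ => fun _ _ => True
end

/-- The quotient QS-interpretation of a traditional interpretation `I` w.r.t. the
largest `L_Φ`-auto-bisimulation. -/
noncomputable def qsQuot {CN RN IN D : Type} (Φ : DLFeat) (I : Interp CN RN IN D) :
    QSInterp CN RN IN (Quot (gbisim Φ I)) where
  toInterp := quotInterp Φ I
  QU R q q' := sSup {n | ∃ x, Quot.mk _ x = q ∧
    n = Set.ncard {y | Quot.mk (gbisim Φ I) y = q' ∧ brInt I R x y}}
  SE r := {q | ∃ x, Quot.mk _ x = q ∧ I.rInt r x x}


/-! ### Auxiliary development for the minimality theorem -/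

section QSAux

variable {CN RN IN D : Type}

theorem brInt_false (I : Interp CN RN IN D) (r : RN) (x y : D) :
    brInt I (r, false) x y ↔ I.rInt r x y := Iff.rfl

theorem brInt_true (I : Interp CN RN IN D) (r : RN) (x y : D) :
    brInt I (r, true) x y ↔ I.rInt r y x := Iff.rfl

theorem lequiv_refl (Φ : DLFeat) (I : Interp CN RN IN D) (x : D) : LEquiv Φ I I x x :=
  fun _ _ => Iff.rfl

theorem lequiv_symm {Φ : DLFeat} {I : Interp CN RN IN D} {x y : D}
    (h : LEquiv Φ I I x y) : LEquiv Φ I I y x := fun C hC => (h C hC).symm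

theorem lequiv_trans {Φ : DLFeat} {I : Interp CN RN IN D} {x y z : D}
    (h : LEquiv Φ I I x y) (h' : LEquiv Φ I I y z) : LEquiv Φ I I x z :=
  fun C hC => (h C hC).trans (h' C hC)

/-- From non-`L_Φ`-equivalence extract a separating concept. -/
theorem sep_exists {Φ : DLFeat} {I : Interp CN RN IN D} {u v : D}
    (h : ¬ LEquiv Φ I I u v) :
    ∃ C : DLConcept CN RN IN, C.inL Φ ∧ u ∈ DLConcept.sem I C ∧ v ∉ DLConcept.sem I C := by
  simp only [LEquiv, not_forall] at h
  obtain ⟨C, hC, hiff⟩ := h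
  by_cases hu : u ∈ DLConcept.sem I C
  · refine ⟨C, hC, hu, fun hv => hiff ⟨fun _ => hv, fun _ => hu⟩⟩
  · refine ⟨.neg C, hC, ?_, ?_⟩
    · simpa [DLConcept.sem] using hu
    · simp only [DLConcept.sem, Set.mem_compl_iff, not_not]
      by_contra hv
      exact hiff ⟨fun h' => absurd h' hu, fun h' => absurd h' hv⟩

/-- Transport of a cardinality of a refined subtype along a paired equivalence. -/
theorem card_eq_of_pairing {α β : Type} {p : α → Prop} {q : β → Prop} (s : α → Prop)
    (t : β → Prop) (h : {a // p a} ≃ {b // q b})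
    (hst : ∀ a : {a // p a}, s a.1 ↔ t (h a).1) :
    Cardinal.mk {a // p a ∧ s a} = Cardinal.mk {b // q b ∧ t b} := by
  refine le_antisymm ?_ ?_
  · refine Cardinal.mk_le_of_injective
      (f := fun a => ⟨(h ⟨a.1, a.2.1⟩).1, (h ⟨a.1, a.2.1⟩).2,
        (hst ⟨a.1, a.2.1⟩).mp a.2.2⟩) ?_
    intro a b hab
    simp only [Subtype.mk.injEq] at hab
    have h2 := h.injective (Subtype.ext hab)
    simp only [Subtype.mk.injEq] at h2
    exact Subtype.ext h2
  · refine Cardinal.mk_le_of_injective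
      (f := fun b => ⟨(h.symm ⟨b.1, b.2.1⟩).1, (h.symm ⟨b.1, b.2.1⟩).2, ?_⟩) ?_
    · have := (hst (h.symm ⟨b.1, b.2.1⟩)).symm
      rw [h.apply_symm_apply] at this
      exact this.mp b.2.2
    · intro a b hab
      simp only [Subtype.mk.injEq] at hab
      have h2 := h.symm.injective (Subtype.ext hab)
      simp only [Subtype.mk.injEq] at h2
      exact Subtype.ext h2

/-- The counting case of the invariance lemma. -/
theorem qmk_eq {Φ : DLFeat} {I : Interp CN RN IN D} {Z : D → D → Prop}
    (hZ : Bisim Φ I I Z) (hQ : Φ.hasQ = true) (r : RN) (b : Bool)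
    (hb : b = true → Φ.hasI = true) {x x' : D} (hxx : Z x x') (C : DLConcept CN RN IN)
    (IH : ∀ y y', Z y y' → (y ∈ DLConcept.sem I C ↔ y' ∈ DLConcept.sem I C)) :
    Cardinal.mk {y // brInt I (r, b) x y ∧ y ∈ DLConcept.sem I C}
      = Cardinal.mk {y // brInt I (r, b) x' y ∧ y ∈ DLConcept.sem I C} := by
  obtain ⟨h1, h2, h3, h4, h5, h6, h7, h8, h9, h10⟩ := hZ
  cases b with
  | false =>
    obtain ⟨h, hh⟩ := h7 hQ r x x' hxx
    exact card_eq_of_pairing (p := fun y => brInt I (r, false) x y)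
      (q := fun y => brInt I (r, false) x' y)
      (fun y => y ∈ DLConcept.sem I C) (fun y => y ∈ DLConcept.sem I C) h
      (fun a => IH a.1 (h a).1 (hh a))
  | true =>
    obtain ⟨h, hh⟩ := h8 hQ (hb rfl) r x x' hxx
    exact card_eq_of_pairing (p := fun y => brInt I (r, true) x y)
      (q := fun y => brInt I (r, true) x' y)
      (fun y => y ∈ DLConcept.sem I C) (fun y => y ∈ DLConcept.sem I C) h
      (fun a => IH a.1 (h a).1 (hh a))

mutual
/-- Invariance of `L_Φ` concepts under auto-bisimulations. -/
theorem concInv {Φ : DLFeat} {I : Interp CN RN IN D} {Z : D → D → Prop}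
    (hZ : Bisim Φ I I Z) (C : DLConcept CN RN IN) (hC : C.inL Φ) (x x' : D)
    (hxx : Z x x') : x ∈ DLConcept.sem I C ↔ x' ∈ DLConcept.sem I C := by
  cases C with
  | atom A => exact hZ.2.1 A x x' hxx
  | top => simp [DLConcept.sem]
  | bot => simp [DLConcept.sem]
  | neg C =>
    simpa only [DLConcept.sem, Set.mem_compl_iff] using
      not_congr (concInv hZ C hC x x' hxx)
  | conj C C' =>
    simpa only [DLConcept.sem, Set.mem_inter_iff] using
      and_congr (concInv hZ C hC.1 x x' hxx) (concInv hZ C' hC.2 x x' hxx)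
  | disj C C' =>
    simpa only [DLConcept.sem, Set.mem_union] using
      or_congr (concInv hZ C hC.1 x x' hxx) (concInv hZ C' hC.2 x x' hxx)
  | all R C =>
    simp only [DLConcept.sem, Set.mem_setOf_eq]
    constructor
    · intro hx y' hR
      obtain ⟨y, hy, hRy⟩ := roleBack hZ R hC.1 x x' y' hxx hR
      exact (concInv hZ C hC.2 y y' hy).mp (hx y hRy)
    · intro hx y hR
      obtain ⟨y', hy, hRy⟩ := roleForth hZ R hC.1 x x' y hxx hR
      exact (concInv hZ C hC.2 y y' hy).mpr (hx y' hRy)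
  | ex R C =>
    simp only [DLConcept.sem, Set.mem_setOf_eq]
    constructor
    · rintro ⟨y, hR, hy⟩
      obtain ⟨y', hyy, hRy⟩ := roleForth hZ R hC.1 x x' y hxx hR
      exact ⟨y', hRy, (concInv hZ C hC.2 y y' hyy).mp hy⟩
    · rintro ⟨y', hR, hy⟩
      obtain ⟨y, hyy, hRy⟩ := roleBack hZ R hC.1 x x' y' hxx hR
      exact ⟨y, hRy, (concInv hZ C hC.2 y y' hyy).mpr hy⟩
  | nom a =>
    have := hZ.2.2.2.2.2.1 hC a x x' hxx
    simpa [DLConcept.sem] using this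
  | atLeast k r b C =>
    obtain ⟨hQ, hb, hCL⟩ := hC
    have hcard := qmk_eq hZ hQ r b hb hxx C
      (fun y y' hyy => concInv hZ C hCL y y' hyy)
    simp only [DLConcept.sem, Set.mem_setOf_eq]
    rw [hcard]
  | atMost k r b C =>
    obtain ⟨hQ, hb, hCL⟩ := hC
    have hcard := qmk_eq hZ hQ r b hb hxx C
      (fun y y' hyy => concInv hZ C hCL y y' hyy)
    simp only [DLConcept.sem, Set.mem_setOf_eq]
    rw [hcard]
  | exSelf r =>
    have := hZ.2.2.2.2.2.2.2.2.2 hC r x x' hxx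
    simpa [DLConcept.sem] using this
termination_by sizeOf C

/-- Forth condition for roles of `L_Φ`. -/
theorem roleForth {Φ : DLFeat} {I : Interp CN RN IN D} {Z : D → D → Prop}
    (hZ : Bisim Φ I I Z) (R : DLRole CN RN IN) (hR : R.inL Φ) (x x' y : D)
    (hxx : Z x x') (hxy : DLRole.sem I R x y) :
    ∃ y', Z y y' ∧ DLRole.sem I R x' y' := by
  cases R with
  | name r => exact hZ.2.2.1 r x x' y hxx hxy
  | eps =>
    cases hxy
    exact ⟨x', hxx, rfl⟩
  | comp R S =>
    obtain ⟨m, hm1, hm2⟩ := hxy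
    obtain ⟨m', hmm, hRm⟩ := roleForth hZ R hR.1 x x' m hxx hm1
    obtain ⟨y', hyy, hSy⟩ := roleForth hZ S hR.2 m m' y hmm hm2
    exact ⟨y', hyy, m', hRm, hSy⟩
  | runion R S =>
    rcases hxy with h | h
    · obtain ⟨y', hyy, hy⟩ := roleForth hZ R hR.1 x x' y hxx h
      exact ⟨y', hyy, Or.inl hy⟩
    · obtain ⟨y', hyy, hy⟩ := roleForth hZ S hR.2 x x' y hxx h
      exact ⟨y', hyy, Or.inr hy⟩
  | star R =>
    induction hxy with
    | refl => exact ⟨x', hxx, Relation.ReflTransGen.refl⟩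
    | tail _ hbc ih =>
      obtain ⟨b', hbb, hb⟩ := ih
      obtain ⟨c', hcc, hc⟩ := roleForth hZ R hR _ b' _ hbb hbc
      exact ⟨c', hcc, hb.tail hc⟩
  | test C =>
    obtain ⟨rfl, hxC⟩ := hxy
    exact ⟨x', hxx, rfl, (concInv hZ C hR x x' hxx).mp hxC⟩
  | inv r =>
    obtain ⟨y', hyy, hy⟩ := (hZ.2.2.2.2.1 hR).1 r x x' y hxx hxy
    exact ⟨y', hyy, hy⟩
  | univ =>
    obtain ⟨y', hyy⟩ := (hZ.2.2.2.2.2.2.2.2.1 hR).1 y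
    exact ⟨y', hyy, trivial⟩
termination_by sizeOf R

/-- Back condition for roles of `L_Φ`. -/
theorem roleBack {Φ : DLFeat} {I : Interp CN RN IN D} {Z : D → D → Prop}
    (hZ : Bisim Φ I I Z) (R : DLRole CN RN IN) (hR : R.inL Φ) (x x' y' : D)
    (hxx : Z x x') (hxy : DLRole.sem I R x' y') :
    ∃ y, Z y y' ∧ DLRole.sem I R x y := by
  cases R with
  | name r => exact hZ.2.2.2.1 r x x' y' hxx hxy
  | eps =>
    cases hxy
    exact ⟨x, hxx, rfl⟩
  | comp R S =>
    obtain ⟨m', hm1, hm2⟩ := hxy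
    obtain ⟨m, hmm, hRm⟩ := roleBack hZ R hR.1 x x' m' hxx hm1
    obtain ⟨y, hyy, hSy⟩ := roleBack hZ S hR.2 m m' y' hmm hm2
    exact ⟨y, hyy, m, hRm, hSy⟩
  | runion R S =>
    rcases hxy with h | h
    · obtain ⟨y, hyy, hy⟩ := roleBack hZ R hR.1 x x' y' hxx h
      exact ⟨y, hyy, Or.inl hy⟩
    · obtain ⟨y, hyy, hy⟩ := roleBack hZ S hR.2 x x' y' hxx h
      exact ⟨y, hyy, Or.inr hy⟩
  | star R =>
    induction hxy with
    | refl => exact ⟨x, hxx, Relation.ReflTransGen.refl⟩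
    | tail _ hbc ih =>
      obtain ⟨b, hbb, hb⟩ := ih
      obtain ⟨c, hcc, hc⟩ := roleBack hZ R hR b _ _ hbb hbc
      exact ⟨c, hcc, hb.tail hc⟩
  | test C =>
    obtain ⟨rfl, hxC⟩ := hxy
    exact ⟨x, hxx, rfl, (concInv hZ C hR x x' hxx).mpr hxC⟩
  | inv r =>
    obtain ⟨y, hyy, hy⟩ := (hZ.2.2.2.2.1 hR).2 r x x' y' hxx hxy
    exact ⟨y, hyy, hy⟩
  | univ =>
    obtain ⟨y, hyy⟩ := (hZ.2.2.2.2.2.2.2.2.1 hR).2 y'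
    exact ⟨y, hyy, trivial⟩
termination_by sizeOf R
end



theorem gbisim_lequiv {Φ : DLFeat} {I : Interp CN RN IN D} {x y : D}
    (h : gbisim Φ I x y) : LEquiv Φ I I x y := by
  obtain ⟨Z, hZ, hxy⟩ := h
  exact fun C hC => concInv hZ C hC x y hxy

theorem quot_eq_lequiv {Φ : DLFeat} {I : Interp CN RN IN D} {x y : D}
    (h : Quot.mk (gbisim Φ I) x = Quot.mk (gbisim Φ I) y) : LEquiv Φ I I x y := by
  have h2 := Quot.eq.mp h
  clear h
  induction h2 with
  | rel a b hab => exact gbisim_lequiv hab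
  | refl a => exact lequiv_refl Φ I a
  | symm a b _ ih => exact lequiv_symm ih
  | trans a b c _ _ ih1 ih2 => exact lequiv_trans ih1 ih2

/-- Finite conjunction of a list of concepts. -/
def listConj : List (DLConcept CN RN IN) → DLConcept CN RN IN
  | [] => .top
  | C :: l => .conj C (listConj l)

/-- Finite disjunction of a list of concepts. -/
def listDisj : List (DLConcept CN RN IN) → DLConcept CN RN IN
  | [] => .bot
  | C :: l => .disj C (listDisj l)

theorem listConj_inL {Φ : DLFeat} {L : List (DLConcept CN RN IN)}
    (h : ∀ C ∈ L, C.inL Φ) : (listConj L).inL Φ := by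
  induction L with
  | nil => trivial
  | cons C l ih =>
    exact ⟨h C (by simp), ih (fun C hC => h C (by simp [hC]))⟩

theorem listDisj_inL {Φ : DLFeat} {L : List (DLConcept CN RN IN)}
    (h : ∀ C ∈ L, C.inL Φ) : (listDisj L).inL Φ := by
  induction L with
  | nil => trivial
  | cons C l ih =>
    exact ⟨h C (by simp), ih (fun C hC => h C (by simp [hC]))⟩

theorem listConj_sem {I : Interp CN RN IN D} {L : List (DLConcept CN RN IN)} {u : D} :
    u ∈ DLConcept.sem I (listConj L) ↔ ∀ C ∈ L, u ∈ DLConcept.sem I C := by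
  induction L with
  | nil => simp [listConj, DLConcept.sem]
  | cons C l ih => simp [listConj, DLConcept.sem, ih]

theorem listDisj_sem {I : Interp CN RN IN D} {L : List (DLConcept CN RN IN)} {u : D} :
    u ∈ DLConcept.sem I (listDisj L) ↔ ∃ C ∈ L, u ∈ DLConcept.sem I C := by
  induction L with
  | nil => simp [listDisj, DLConcept.sem]
  | cons C l ih => simp [listDisj, DLConcept.sem, ih]

theorem listDisj_qsem {D' : Type} {J : QSInterp CN RN IN D'} {L : List (DLConcept CN RN IN)}
    {u : D'} :
    u ∈ DLConcept.qsem J (listDisj L) ↔ ∃ C ∈ L, u ∈ DLConcept.qsem J C := by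
  induction L with
  | nil => simp [listDisj, DLConcept.qsem]
  | cons C l ih => simp [listDisj, DLConcept.qsem, ih]

/-- A finite family of pairwise-disjoint `L_Φ`-concepts covering the domain, each
contained in a single `L_Φ`-equivalence class. -/
theorem exists_family (Φ : DLFeat) (I : Interp CN RN IN D)
    (hfin : Finite (Quot (gbisim Φ I))) :
    ∃ (n : ℕ) (E : Fin n → DLConcept CN RN IN),
      (∀ i, (E i).inL Φ) ∧
      (∀ u, ∃ i, u ∈ DLConcept.sem I (E i)) ∧
      (∀ i j u, i ≠ j → u ∈ DLConcept.sem I (E i) → u ∉ DLConcept.sem I (E j)) ∧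
      (∀ i u v, u ∈ DLConcept.sem I (E i) → v ∈ DLConcept.sem I (E i) → LEquiv Φ I I u v) ∧
      (∀ i u v, LEquiv Φ I I u v → u ∈ DLConcept.sem I (E i) → v ∈ DLConcept.sem I (E i)) := by
  classical
  have := Fintype.ofFinite (Quot (gbisim Φ I))
  set n := Fintype.card (Quot (gbisim Φ I)) with hn
  have eQ : Quot (gbisim Φ I) ≃ Fin n := Fintype.equivFin _
  have hrep : ∀ q : Quot (gbisim Φ I), ∃ u : D, Quot.mk _ u = q := fun q => q.exists_rep
  choose rep hrep using hrep
  set z : Fin n → D := fun i => rep (eQ.symm i) with hz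
  have cover0 : ∀ u : D, ∃ i, LEquiv Φ I I u (z i) := by
    intro u
    refine ⟨eQ (Quot.mk _ u), ?_⟩
    have : Quot.mk (gbisim Φ I) (z (eQ (Quot.mk _ u))) = Quot.mk (gbisim Φ I) u := by
      simp only [hz, Equiv.symm_apply_apply]
      exact hrep _
    exact lequiv_symm (quot_eq_lequiv this)
  -- separating concepts
  have hsep : ∀ i j : Fin n, ∃ Cij : DLConcept CN RN IN, Cij.inL Φ ∧
      z i ∈ DLConcept.sem I Cij ∧
      (¬ LEquiv Φ I I (z i) (z j) → z j ∉ DLConcept.sem I Cij) := by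
    intro i j
    by_cases h : LEquiv Φ I I (z i) (z j)
    · exact ⟨.top, trivial, by simp [DLConcept.sem], fun h' => absurd h h'⟩
    · obtain ⟨C, hC1, hC2, hC3⟩ := sep_exists h
      exact ⟨C, hC1, hC2, fun _ => hC3⟩
  choose S hS1 hS2 hS3 using hsep
  set Ch : Fin n → DLConcept CN RN IN :=
    fun i => listConj ((List.finRange n).map (S i)) with hCh
  have hChin : ∀ i, (Ch i).inL Φ := by
    intro i
    refine listConj_inL ?_
    intro C hC
    simp only [List.mem_map] at hC
    obtain ⟨j, _, rfl⟩ := hC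
    exact hS1 i j
  have hChch : ∀ i u, u ∈ DLConcept.sem I (Ch i) ↔ LEquiv Φ I I u (z i) := by
    intro i u
    constructor
    · intro hu
      obtain ⟨k, hk⟩ := cover0 u
      by_contra hne
      have hik : ¬ LEquiv Φ I I (z i) (z k) := by
        intro h
        exact hne (lequiv_trans hk (lequiv_symm h))
      have humem : u ∈ DLConcept.sem I (S i k) := by
        rw [hCh] at hu
        exact listConj_sem.mp hu (S i k) (List.mem_map.mpr ⟨k, List.mem_finRange k, rfl⟩)
      have : z k ∈ DLConcept.sem I (S i k) := (hk (S i k) (hS1 i k)).mp humem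
      exact hS3 i k hik this
    · intro hu
      rw [hCh]
      refine listConj_sem.mpr ?_
      intro C hC
      simp only [List.mem_map] at hC
      obtain ⟨j, _, rfl⟩ := hC
      exact (hu (S i j) (hS1 i j)).mpr (hS2 i j)
  -- disjointified family
  refine ⟨n, fun i => .conj (Ch i)
    (listConj (((List.finRange n).filter (fun j => decide (j < i))).map
      (fun j => .neg (Ch j)))), ?_, ?_, ?_, ?_, ?_⟩
  · intro i
    refine ⟨hChin i, listConj_inL ?_⟩
    intro C hC
    simp only [List.mem_map] at hC
    obtain ⟨j, _, rfl⟩ := hC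
    exact hChin j
  · intro u
    obtain ⟨k, hk⟩ := cover0 u
    have hne : (Finset.univ.filter (fun i => u ∈ DLConcept.sem I (Ch i))).Nonempty :=
      ⟨k, by simp [(hChch k u).mpr hk]⟩
    set i0 := (Finset.univ.filter (fun i => u ∈ DLConcept.sem I (Ch i))).min' hne with hi0
    have hi0mem : u ∈ DLConcept.sem I (Ch i0) := by
      have := (Finset.univ.filter (fun i => u ∈ DLConcept.sem I (Ch i))).min'_mem hne
      simpa using this
    refine ⟨i0, ?_⟩
    show u ∈ DLConcept.sem I (Ch i0) ∩ _
    refine ⟨hi0mem, ?_⟩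
    refine listConj_sem.mpr ?_
    intro C hC
    simp only [List.mem_map, List.mem_filter] at hC
    obtain ⟨j, ⟨_, hj⟩, rfl⟩ := hC
    have hj' : j < i0 := by simpa using hj
    show u ∈ (DLConcept.sem I (Ch j))ᶜ
    intro hmem
    have : i0 ≤ j := Finset.min'_le _ j (by simp [hmem])
    exact absurd hj' (not_lt.mpr this)
  · intro i j u hij hui huj
    obtain ⟨hui1, hui2⟩ := hui
    obtain ⟨huj1, huj2⟩ := huj
    rcases lt_or_gt_of_ne hij with h | h
    · have : u ∈ (DLConcept.sem I (Ch i))ᶜ := by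
        refine listConj_sem.mp huj2 _ (List.mem_map.mpr ⟨i, ?_, rfl⟩)
        simp [List.mem_filter, List.mem_finRange, h]
      exact this hui1
    · have : u ∈ (DLConcept.sem I (Ch j))ᶜ := by
        refine listConj_sem.mp hui2 _ (List.mem_map.mpr ⟨j, ?_, rfl⟩)
        simp [List.mem_filter, List.mem_finRange, h]
      exact this huj1
  · intro i u v hu hv
    exact lequiv_trans ((hChch i u).mp hu.1) (lequiv_symm ((hChch i v).mp hv.1))
  · intro i u v huv hu
    obtain ⟨hu1, hu2⟩ := hu
    constructor
    · exact (hChch i v).mpr (lequiv_trans (lequiv_symm huv) ((hChch i u).mp hu1))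
    · refine listConj_sem.mpr ?_
      intro C hC
      simp only [List.mem_map] at hC
      obtain ⟨j, hj, rfl⟩ := hC
      have := listConj_sem.mp hu2 _ (List.mem_map.mpr ⟨j, hj, rfl⟩)
      show v ∈ (DLConcept.sem I (Ch j))ᶜ
      intro hmem
      exact this ((hChch j u).mpr (lequiv_trans huv ((hChch j v).mp hmem)))


theorem qsem_nonempty_transfer {Φ : DLFeat} {I : Interp CN RN IN D} {D' : Type}
    {J : QSInterp CN RN IN D'}
    (hsame : ∀ C C' : DLConcept CN RN IN, C.inL Φ → C'.inL Φ →
        (DLConcept.sem I C ⊆ DLConcept.sem I C' ↔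
          DLConcept.qsem J C ⊆ DLConcept.qsem J C'))
    {C : DLConcept CN RN IN} (hC : C.inL Φ) (h : (DLConcept.sem I C).Nonempty) :
    (DLConcept.qsem J C).Nonempty := by
  by_contra hne
  rw [Set.not_nonempty_iff_eq_empty] at hne
  have hsub : DLConcept.qsem J C ⊆ DLConcept.qsem J (.bot) := by
    simp [hne]
  have h2 := (hsame C .bot hC trivial).mpr hsub
  obtain ⟨u, hu⟩ := h
  have := h2 hu
  simp [DLConcept.sem] at this

theorem succ_finite {Φ : DLFeat} {I : Interp CN RN IN D} {D' : Type} [Finite D']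
    {J : QSInterp CN RN IN D'}
    (hsame : ∀ C C' : DLConcept CN RN IN, C.inL Φ → C'.inL Φ →
        (DLConcept.sem I C ⊆ DLConcept.sem I C' ↔
          DLConcept.qsem J C ⊆ DLConcept.qsem J C'))
    {n : ℕ} {E : Fin n → DLConcept CN RN IN}
    (hin : ∀ i, (E i).inL Φ)
    (hcov : ∀ u, ∃ i, u ∈ DLConcept.sem I (E i))
    (hcls : ∀ i u v, u ∈ DLConcept.sem I (E i) → v ∈ DLConcept.sem I (E i) →
      LEquiv Φ I I u v)
    (hQ : Φ.hasQ = true) (r : RN) (b : Bool) (hb : b = true → Φ.hasI = true)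
    (i : Fin n) (x : D) :
    {y | brInt I (r, b) x y ∧ y ∈ DLConcept.sem I (E i)}.Finite := by
  classical
  by_contra hinf
  obtain ⟨i0, hx0⟩ := hcov x
  have hax : ∀ k : ℕ, DLConcept.sem I (E i0) ⊆
      DLConcept.sem I (.atLeast k r b (E i)) := by
    intro k u hu
    have hux : LEquiv Φ I I x u := hcls i0 x u hx0 hu
    have hx : x ∈ DLConcept.sem I (.atLeast k r b (E i)) := by
      simp only [DLConcept.sem, Set.mem_setOf_eq]
      have hI : (({y | brInt I (r, b) x y ∧ y ∈ DLConcept.sem I (E i)} : Set D)).Infinite :=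
        hinf
      have : Infinite {y // brInt I (r, b) x y ∧ y ∈ DLConcept.sem I (E i)} :=
        hI.to_subtype
      exact le_trans (Cardinal.nat_lt_aleph0 k).le (Cardinal.aleph0_le_mk _)
    have hLin : (DLConcept.atLeast k r b (E i)).inL Φ := ⟨hQ, hb, hin i⟩
    exact (hux _ hLin).mp hx
  obtain ⟨d, hd⟩ := qsem_nonempty_transfer hsame (hin i0) ⟨x, hx0⟩
  have hk : ∀ k : ℕ, (k : ℕ∞) ≤ qsum (J.QU (r, b) d) (DLConcept.qsem J (E i)) := by
    intro k
    have hLin : (DLConcept.atLeast k r b (E i)).inL Φ := ⟨hQ, hb, hin i⟩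
    have hq := (hsame (E i0) (.atLeast k r b (E i)) (hin i0) hLin).mp (hax k)
    exact hq hd
  have := Fintype.ofFinite D'
  have hbound : qsum (J.QU (r, b) d) (DLConcept.qsem J (E i)) ≤
      ∑ y ∈ Finset.univ, (J.QU (r, b) d y : ℕ∞) := by
    refine iSup_le fun s => iSup_le fun _ => ?_
    exact Finset.sum_le_sum_of_subset (Finset.subset_univ s)
  set N : ℕ := ∑ y ∈ Finset.univ, J.QU (r, b) d y with hN
  have hNe : (∑ y ∈ Finset.univ, (J.QU (r, b) d y : ℕ∞)) = (N : ℕ∞) :=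
    (Nat.cast_sum _ _).symm
  have hfinal := (hk (N + 1)).trans (hbound.trans_eq hNe)
  have := Nat.cast_le (α := ℕ∞) |>.mp hfinal
  omega


theorem qmaster {Φ : DLFeat} {I : Interp CN RN IN D} {D' : Type} [Finite D']
    {J : QSInterp CN RN IN D'}
    (hsame : ∀ C C' : DLConcept CN RN IN, C.inL Φ → C'.inL Φ →
        (DLConcept.sem I C ⊆ DLConcept.sem I C' ↔
          DLConcept.qsem J C ⊆ DLConcept.qsem J C'))
    {n : ℕ} {E : Fin n → DLConcept CN RN IN}
    (hin : ∀ i, (E i).inL Φ)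
    (hcov : ∀ u, ∃ i, u ∈ DLConcept.sem I (E i))
    (hdisj : ∀ i j u, i ≠ j → u ∈ DLConcept.sem I (E i) → u ∉ DLConcept.sem I (E j))
    (hcls : ∀ i u v, u ∈ DLConcept.sem I (E i) → v ∈ DLConcept.sem I (E i) →
      LEquiv Φ I I u v)
    (hQ : Φ.hasQ = true) (r : RN) (b : Bool) (hb : b = true → Φ.hasI = true)
    {x x' : D} (hxx : LEquiv Φ I I x x') :
    ∃ h : {y // brInt I (r, b) x y} ≃ {y // brInt I (r, b) x' y},
      ∀ y, LEquiv Φ I I y.1 (h y).1 := by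
  classical
  have hf : ∀ u, u ∈ DLConcept.sem I (E ((hcov u).choose)) := fun u => (hcov u).choose_spec
  set f : D → Fin n := fun u => (hcov u).choose with hfdef
  have hfu : ∀ u i, u ∈ DLConcept.sem I (E i) → f u = i := by
    intro u i hu
    by_contra hne
    exact hdisj (f u) i u hne (hf u) hu
  -- classwise cardinal equality
  have hmk : ∀ i : Fin n,
      Cardinal.mk {y // brInt I (r, b) x y ∧ y ∈ DLConcept.sem I (E i)} =
      Cardinal.mk {y // brInt I (r, b) x' y ∧ y ∈ DLConcept.sem I (E i)} := by
    intro i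
    have hfin1 : ({y | brInt I (r, b) x y ∧ y ∈ DLConcept.sem I (E i)} : Set D).Finite :=
      succ_finite hsame hin hcov hcls hQ r b hb i x
    have hfin2 : ({y | brInt I (r, b) x' y ∧ y ∈ DLConcept.sem I (E i)} : Set D).Finite :=
      succ_finite hsame hin hcov hcls hQ r b hb i x'
    have h1 : Cardinal.mk {y // brInt I (r, b) x y ∧ y ∈ DLConcept.sem I (E i)}
        < Cardinal.aleph0 := by
      have := hfin1.to_subtype
      exact Cardinal.mk_lt_aleph0_iff.mpr this
    have h2 : Cardinal.mk {y // brInt I (r, b) x' y ∧ y ∈ DLConcept.sem I (E i)}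
        < Cardinal.aleph0 := by
      have := hfin2.to_subtype
      exact Cardinal.mk_lt_aleph0_iff.mpr this
    obtain ⟨m, hm⟩ := Cardinal.lt_aleph0.mp h1
    obtain ⟨m', hm'⟩ := Cardinal.lt_aleph0.mp h2
    have hiff : ∀ k : ℕ, ((k : Cardinal) ≤ (m : Cardinal) ↔ (k : Cardinal) ≤ (m' : Cardinal)) := by
      intro k
      have hLin : (DLConcept.atLeast k r b (E i)).inL Φ := ⟨hQ, hb, hin i⟩
      have := hxx _ hLin
      simp only [DLConcept.sem, Set.mem_setOf_eq] at this
      rw [hm, hm'] at this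
      exact this
    have hmm : m = m' := by
      have h1 := (hiff m).mp le_rfl
      have h2 := (hiff m').mpr le_rfl
      exact le_antisymm (Nat.cast_le.mp h1) (Nat.cast_le.mp h2)
    rw [hm, hm', hmm]
  have hmid : ∀ i : Fin n,
      Nonempty ({y // brInt I (r, b) x y ∧ y ∈ DLConcept.sem I (E i)} ≃
        {y // brInt I (r, b) x' y ∧ y ∈ DLConcept.sem I (E i)}) :=
    fun i => Cardinal.eq.mp (hmk i)
  set mid := fun i => Classical.choice (hmid i) with hmiddef
  set F : {y // brInt I (r, b) x y} → Fin n := fun a => f a.1 with hF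
  set F' : {y // brInt I (r, b) x' y} → Fin n := fun a => f a.1 with hF'
  have gcast : ∀ (i : Fin n) (a : {a : {y // brInt I (r, b) x y} // F a = i}),
      a.1.1 ∈ DLConcept.sem I (E i) := by
    rintro i ⟨⟨y0, hy0⟩, ha⟩
    subst ha
    exact hf y0
  have gcast' : ∀ (i : Fin n) (a : {a : {y // brInt I (r, b) x' y} // F' a = i}),
      a.1.1 ∈ DLConcept.sem I (E i) := by
    rintro i ⟨⟨y0, hy0⟩, ha⟩
    subst ha
    exact hf y0
  let g : ∀ i, {a : {y // brInt I (r, b) x y} // F a = i} ≃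
      {y // brInt I (r, b) x y ∧ y ∈ DLConcept.sem I (E i)} := fun i =>
    { toFun := fun a => ⟨a.1.1, a.1.2, gcast i a⟩
      invFun := fun s => ⟨⟨s.1, s.2.1⟩, hfu s.1 i s.2.2⟩
      left_inv := fun a => rfl
      right_inv := fun s => rfl }
  let g' : ∀ i, {a : {y // brInt I (r, b) x' y} // F' a = i} ≃
      {y // brInt I (r, b) x' y ∧ y ∈ DLConcept.sem I (E i)} := fun i =>
    { toFun := fun a => ⟨a.1.1, a.1.2, gcast' i a⟩
      invFun := fun s => ⟨⟨s.1, s.2.1⟩, hfu s.1 i s.2.2⟩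
      left_inv := fun a => rfl
      right_inv := fun s => rfl }
  refine ⟨((Equiv.sigmaFiberEquiv F).symm.trans
      (Equiv.sigmaCongrRight (fun i => ((g i).trans (mid i)).trans (g' i).symm))).trans
      (Equiv.sigmaFiberEquiv F'), ?_⟩
  intro a
  exact hcls (f a.1) a.1 _ (hf a.1) ((mid (f a.1) ((g (f a.1)) ⟨a, rfl⟩)).2.2)

theorem lequiv_bisim {Φ : DLFeat} {I : Interp CN RN IN D}
    (hfin : Finite (Quot (gbisim Φ I))) {D' : Type} [Finite D']
    {J : QSInterp CN RN IN D'}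
    (hsame : ∀ C C' : DLConcept CN RN IN, C.inL Φ → C'.inL Φ →
        (DLConcept.sem I C ⊆ DLConcept.sem I C' ↔
          DLConcept.qsem J C ⊆ DLConcept.qsem J C')) :
    Bisim Φ I I (LEquiv Φ I I) := by
  obtain ⟨n, E, hin, hcov, hdisj, hcls, hclosed⟩ := exists_family Φ I hfin
  refine ⟨fun a => lequiv_refl Φ I _, ?_, ?_, ?_, ?_, ?_, ?_, ?_, ?_, ?_⟩
  · intro A x x' h
    exact h (.atom A) trivial
  · intro r x x' y hxx hr
    obtain ⟨i, hy⟩ := hcov y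
    have hex : x ∈ DLConcept.sem I (.ex (.name r) (E i)) := ⟨y, hr, hy⟩
    have hLin : (DLConcept.ex (.name r) (E i)).inL Φ := ⟨trivial, hin i⟩
    obtain ⟨y', hry', hy'⟩ := (hxx _ hLin).mp hex
    exact ⟨y', hcls i y y' hy hy', hry'⟩
  · intro r x x' y' hxx hr
    obtain ⟨i, hy⟩ := hcov y'
    have hex : x' ∈ DLConcept.sem I (.ex (.name r) (E i)) := ⟨y', hr, hy⟩
    have hLin : (DLConcept.ex (.name r) (E i)).inL Φ := ⟨trivial, hin i⟩
    obtain ⟨y, hry, hyE⟩ := (hxx _ hLin).mpr hex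
    exact ⟨y, hcls i y y' hyE hy, hry⟩
  · intro hI
    constructor
    · intro r x x' y hxx hyx
      obtain ⟨i, hy⟩ := hcov y
      have hex : x ∈ DLConcept.sem I (.ex (.inv r) (E i)) := ⟨y, hyx, hy⟩
      have hLin : (DLConcept.ex (.inv r) (E i)).inL Φ := ⟨hI, hin i⟩
      obtain ⟨y', hry', hy'⟩ := (hxx _ hLin).mp hex
      exact ⟨y', hcls i y y' hy hy', hry'⟩
    · intro r x x' y' hxx hyx
      obtain ⟨i, hy⟩ := hcov y'
      have hex : x' ∈ DLConcept.sem I (.ex (.inv r) (E i)) := ⟨y', hyx, hy⟩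
      have hLin : (DLConcept.ex (.inv r) (E i)).inL Φ := ⟨hI, hin i⟩
      obtain ⟨y, hry, hyE⟩ := (hxx _ hLin).mpr hex
      exact ⟨y, hcls i y y' hyE hy, hry⟩
  · intro hO a x x' h
    have := h (.nom a) hO
    simpa [DLConcept.sem] using this
  · intro hQ r x x' hxx
    exact qmaster hsame hin hcov hdisj hcls hQ r false
      (fun h => (Bool.false_ne_true h).elim) hxx
  · intro hQ hI r x x' hxx
    exact qmaster hsame hin hcov hdisj hcls hQ r true (fun _ => hI) hxx
  · intro _
    exact ⟨fun x => ⟨x, lequiv_refl Φ I x⟩, fun x' => ⟨x', lequiv_refl Φ I x'⟩⟩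
  · intro hS r x x' h
    have := h (.exSelf r) hS
    simpa [DLConcept.sem] using this


theorem finite_case {Φ : DLFeat} {I : Interp CN RN IN D}
    (hfin : Finite (Quot (gbisim Φ I))) (D' : Type) [Finite D']
    (J : QSInterp CN RN IN D')
    (hsame : ∀ C C' : DLConcept CN RN IN, C.inL Φ → C'.inL Φ →
        (DLConcept.sem I C ⊆ DLConcept.sem I C' ↔
          DLConcept.qsem J C ⊆ DLConcept.qsem J C')) :
    Cardinal.mk (Quot (gbisim Φ I)) ≤ Cardinal.mk D' := by
  classical
  obtain ⟨n, E, hin, hcov, hdisj, hcls, hclosed⟩ := exists_family Φ I hfin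
  have hbis : Bisim Φ I I (LEquiv Φ I I) := lequiv_bisim hfin hsame
  have hf : ∀ u, u ∈ DLConcept.sem I (E ((hcov u).choose)) := fun u => (hcov u).choose_spec
  set f : D → Fin n := fun u => (hcov u).choose with hfdef
  have hfu : ∀ u i, u ∈ DLConcept.sem I (E i) → f u = i := by
    intro u i hu
    by_contra hne
    exact hdisj (f u) i u hne (hf u) hu
  have hLin : ∀ L : List (Fin n), (listDisj (L.map E)).inL Φ := by
    intro L
    refine listDisj_inL ?_
    intro C hC
    obtain ⟨i, _, rfl⟩ := List.mem_map.mp hC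
    exact hin i
  have hbigD : ∀ d : D', ∃ i, d ∈ DLConcept.qsem J (E i) := by
    have hval : DLConcept.sem I (.top) ⊆
        DLConcept.sem I (listDisj ((List.finRange n).map E)) := by
      intro u _
      obtain ⟨i, hi⟩ := hcov u
      exact listDisj_sem.mpr ⟨E i, List.mem_map.mpr ⟨i, List.mem_finRange i, rfl⟩, hi⟩
    have hq := (hsame _ _ (show (DLConcept.top : DLConcept CN RN IN).inL Φ from trivial) (hLin (List.finRange n))).mp hval
    intro d
    have hd : d ∈ DLConcept.qsem J (listDisj ((List.finRange n).map E)) :=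
      hq (Set.mem_univ d)
    obtain ⟨C, hC, hdC⟩ := listDisj_qsem.mp hd
    obtain ⟨i, _, rfl⟩ := List.mem_map.mp hC
    exact ⟨i, hdC⟩
  have hpick : ∀ i : Fin n, (DLConcept.sem I (E i)).Nonempty →
      ∃ d : D', d ∈ DLConcept.qsem J (E i) ∧
        ∀ j, j ≠ i → d ∉ DLConcept.qsem J (E j) := by
    intro i hi
    obtain ⟨u, hu⟩ := hi
    set L := ((List.finRange n).filter (fun j => decide (j ≠ i))).map E with hLdef
    have hmemL : ∀ j : Fin n, j ≠ i → E j ∈ L := by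
      intro j hj
      exact List.mem_map.mpr ⟨j, List.mem_filter.mpr ⟨List.mem_finRange j, by simpa using hj⟩, rfl⟩
    have hnotval : ¬ (DLConcept.sem I .top ⊆ DLConcept.sem I (listDisj L)) := by
      intro hsub
      have hu2 := hsub (Set.mem_univ u)
      obtain ⟨C, hC, huC⟩ := listDisj_sem.mp hu2
      obtain ⟨j, hj, rfl⟩ := List.mem_map.mp hC
      have hj' : j ≠ i := by simpa using (List.mem_filter.mp hj).2
      exact hdisj i j u (Ne.symm hj') hu huC
    have hLin2 : (listDisj L).inL Φ := by
      rw [hLdef]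
      refine listDisj_inL ?_
      intro C hC
      obtain ⟨j, _, rfl⟩ := List.mem_map.mp hC
      exact hin j
    have hnq : ¬ (DLConcept.qsem J .top ⊆ DLConcept.qsem J (listDisj L)) :=
      fun h => hnotval ((hsame _ _ (show (DLConcept.top : DLConcept CN RN IN).inL Φ from trivial) hLin2).mpr h)
    obtain ⟨d, _, hd2⟩ := Set.not_subset.mp hnq
    refine ⟨d, ?_, ?_⟩
    · obtain ⟨k, hk⟩ := hbigD d
      by_cases hki : k = i
      · exact hki ▸ hk
      · exact absurd (listDisj_qsem.mpr ⟨E k, hmemL k hki, hk⟩) hd2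
    · intro j hj hdj
      exact hd2 (listDisj_qsem.mpr ⟨E j, hmemL j hj, hdj⟩)
  choose dd hdd1 hdd2 using hpick
  have hgwd : ∀ u v : D, gbisim Φ I u v → f u = f v := by
    intro u v huv
    have hL : LEquiv Φ I I u v := gbisim_lequiv huv
    have hv : v ∈ DLConcept.sem I (E (f u)) := hclosed (f u) u v hL (hf u)
    exact (hfu v (f u) hv).symm
  set g : Quot (gbisim Φ I) → Fin n := Quot.lift f hgwd with hg
  have hgne : ∀ q, (DLConcept.sem I (E (g q))).Nonempty := by
    intro q
    obtain ⟨u, rfl⟩ := q.exists_rep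
    exact ⟨u, hf u⟩
  refine Cardinal.mk_le_of_injective (f := fun q => dd (g q) (hgne q)) ?_
  intro q q' hqq
  have hqq' : dd (g q) (hgne q) = dd (g q') (hgne q') := hqq
  have hgg : g q = g q' := by
    by_contra hne
    have h1 := hdd1 (g q) (hgne q)
    have h2 := hdd2 (g q') (hgne q') (g q) hne
    rw [hqq'] at h1
    exact h2 h1
  obtain ⟨u, rfl⟩ := q.exists_rep
  obtain ⟨v, rfl⟩ := q'.exists_rep
  have hfe : f u = f v := hgg
  have hv : v ∈ DLConcept.sem I (E (f u)) := by rw [hfe]; exact hf v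
  have hLuv : LEquiv Φ I I u v := hcls (f u) u v (hf u) hv
  exact Quot.sound ⟨LEquiv Φ I I, hbis, hLuv⟩

end QSAux

/-- If `I` is unreachable-objects-free and its quotient QS-interpretation
is finite, then the quotient is a minimal QS-interpretation validating the same
terminological axioms of `L_Φ` as `I`. -/
theorem qs_quotient_minimality {CN RN IN D : Type} (Φ : DLFeat)
    (I : Interp CN RN IN D) (huof : UOF Φ I) (hfin : Finite (Quot (gbisim Φ I))) :
    ∀ (D' : Type) (J : QSInterp CN RN IN D'), J.Proper →
      (∀ C C' : DLConcept CN RN IN, C.inL Φ → C'.inL Φ →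
        (DLConcept.sem I C ⊆ DLConcept.sem I C' ↔
          DLConcept.qsem J C ⊆ DLConcept.qsem J C')) →
      Cardinal.mk (Quot (gbisim Φ I)) ≤ Cardinal.mk D' := by
  intro D' J _hProper hsame
  rcases finite_or_infinite D' with hD | hD
  · exact finite_case hfin D' J hsame
  · have h1 : Cardinal.mk (Quot (gbisim Φ I)) < Cardinal.aleph0 :=
      Cardinal.mk_lt_aleph0_iff.mpr hfin
    have h2 : Cardinal.aleph0 ≤ Cardinal.mk D' := Cardinal.infinite_iff.mp hD
    exact h1.le.trans h2
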